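/- Let q be a prime power, r ≥ 1, m ≥ 1, L ≥ 2m, and let v ∈ F_{q^r}^L be counted via the field F_{q^r}. For a nonzero w ∈ F_{q^r}, the number of nonzero tuples (s_1,…,s_L) ∈ F_{q^r}^L with Σ_{i=1}^m s_{2i−1}·s_{2i} = w (field multiplication) is q^{r(L−m−1)}(q^{rm} − 1), and this count is strictly greater than the count q^{r(L−m−1)}(q^m − 1)^r obtained with coordinate-wise multiplication in F_q^r for a vector all of whose r entries are nonzero, whenever r ≥ 2. -/

import Mathlib

open Finset

lemma card_fiber_mul {α β : Type*} [Fintype α] [Fintype β] [DecidableEq α] [DecidableEq β]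
    [AddCommGroup α] [AddCommGroup β] (g : α →+ β) (hg : Function.Surjective g) (b : β) :
    (univ.filter fun a => g a = b).card * Fintype.card β = Fintype.card α := by
  have hconst : ∀ b' : β, (univ.filter fun a => g a = b').card
      = (univ.filter fun a => g a = b).card := by
    intro b'
    obtain ⟨c, hc⟩ := hg (b - b')
    refine Finset.card_nbij' (fun a => a + c) (fun a => a - c) ?_ ?_ ?_ ?_
    · intro a ha
      simp only [mem_coe, mem_filter, mem_univ, true_and] at ha ⊢
      rw [map_add, ha, hc]; abel
    · intro a ha
      simp only [mem_coe, mem_filter, mem_univ, true_and] at ha ⊢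
      rw [map_sub, ha, hc]; abel
    · intro a _; simp
    · intro a _; simp
  have := Finset.card_eq_sum_card_fiberwise
    (f := g) (s := (univ : Finset α)) (t := (univ : Finset β)) (fun a _ => mem_univ _)
  rw [card_univ] at this
  rw [this]
  rw [Finset.sum_congr rfl (fun b' _ => hconst b'), Finset.sum_const, card_univ, smul_eq_mul,
    mul_comm]

lemma dot_fiber {E : Type*} [Field E] [Fintype E] [DecidableEq E] {m : ℕ}
    (x : Fin m → E) (hx : x ≠ 0) (w : E) :
    (univ.filter fun y : Fin m → E => ∑ i, x i * y i = w).card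
      = Fintype.card E ^ (m - 1) := by
  obtain ⟨j, hj⟩ : ∃ j, x j ≠ 0 := by
    by_contra h; push_neg at h; exact hx (funext h)
  have hm : 1 ≤ m := Nat.one_le_iff_ne_zero.mpr (by rintro rfl; exact absurd (Subsingleton.elim x 0) hx)
  set g : (Fin m → E) →+ E := AddMonoidHom.mk' (fun y => ∑ i, x i * y i)
    (by intro a b; simp [mul_add, Finset.sum_add_distrib]) with hg
  have hsurj : Function.Surjective g := by
    intro v
    refine ⟨Pi.single j (v / x j), ?_⟩
    simp only [hg, AddMonoidHom.mk'_apply, Pi.single_apply, mul_ite, mul_zero]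
    rw [Finset.sum_ite_eq' univ j (fun i => x i * (v / x j))]
    simp [mul_div_cancel₀ _ hj]
  have h := card_fiber_mul g hsurj w
  have hcard : Fintype.card (Fin m → E) = Fintype.card E ^ m := by
    simp [Fintype.card_fun]
  rw [hcard] at h
  have hQ : 0 < Fintype.card E := Fintype.card_pos
  have : Fintype.card E ^ m = Fintype.card E ^ (m - 1) * Fintype.card E := by
    rw [← pow_succ]; congr 1; omega
  rw [this] at h
  exact Nat.eq_of_mul_eq_mul_right hQ h

lemma dot_count {E : Type*} [Field E] [Fintype E] [DecidableEq E] {m : ℕ} (hm : 1 ≤ m)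
    (w : E) (hw : w ≠ 0) :
    (univ.filter fun p : (Fin m → E) × (Fin m → E) => ∑ i, p.1 i * p.2 i = w).card
      = (Fintype.card E ^ m - 1) * Fintype.card E ^ (m - 1) := by
  have h := Finset.card_eq_sum_card_fiberwise
    (f := Prod.fst) (s := univ.filter fun p : (Fin m → E) × (Fin m → E) => ∑ i, p.1 i * p.2 i = w)
    (t := (univ : Finset (Fin m → E))) (fun a _ => mem_univ _)
  rw [h]
  have hfib : ∀ x : Fin m → E,
      (((univ.filter fun p : (Fin m → E) × (Fin m → E) => ∑ i, p.1 i * p.2 i = w)).filter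
        fun p => p.1 = x).card
      = (univ.filter fun y : Fin m → E => ∑ i, x i * y i = w).card := by
    intro x
    refine Finset.card_nbij' (fun p => p.2) (fun y => (x, y)) ?_ ?_ ?_ ?_
    · intro p hp
      simp only [mem_coe, mem_filter, mem_univ, true_and] at hp ⊢
      rw [← hp.2]; rw [hp.1]
    · intro y hy
      simp only [mem_coe, mem_filter, mem_univ, true_and] at hy ⊢
      exact ⟨hy, trivial⟩
    · intro p hp
      simp only [mem_coe, mem_filter, mem_univ, true_and] at hp
      rw [← hp.2]
    · intro y _; rfl
  rw [Finset.sum_congr rfl (fun x _ => hfib x)]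
  rw [← Finset.sum_erase_add univ _ (mem_univ (0 : Fin m → E))]
  have h0 : (univ.filter fun y : Fin m → E => ∑ i, (0 : Fin m → E) i * y i = w).card = 0 := by
    rw [Finset.card_eq_zero, Finset.filter_eq_empty_iff]
    intro y _
    simp [hw.symm]
  rw [h0, add_zero]
  rw [Finset.sum_congr rfl (fun x hx => dot_fiber x (Finset.ne_of_mem_erase hx) w),
    Finset.sum_const, smul_eq_mul]
  congr 1
  rw [Finset.card_erase_of_mem (mem_univ _), card_univ]
  simp [Fintype.card_fun]

lemma ineq_lemma {q r m : ℕ} (hq : 2 ≤ q) (hr : 2 ≤ r) (hm : 1 ≤ m) :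
    (q ^ m - 1) ^ r < q ^ (r * m) - 1 := by
  set a := q ^ m with ha
  have ha2 : 2 ≤ a := by
    calc 2 = 2^1 := rfl
    _ ≤ q ^ m := Nat.pow_le_pow_left hq m |>.trans' (Nat.pow_le_pow_right (by norm_num) hm)
  have h1 : (a - 1) ^ r ≤ (a - 1) * a ^ (r - 1) := by
    have : (a - 1) ^ r = (a - 1) * (a - 1) ^ (r - 1) := by
      rw [← pow_succ']; congr 1; omega
    rw [this]
    exact Nat.mul_le_mul_left _ (Nat.pow_le_pow_left (by omega) _)
  have h2 : a ^ r = a * a ^ (r - 1) := by rw [← pow_succ']; congr 1; omega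
  have h3 : 2 ≤ a ^ (r - 1) := by
    calc 2 = 2^1 := rfl
    _ ≤ a ^ (r-1) := (Nat.pow_le_pow_left ha2 _).trans' (Nat.pow_le_pow_right (by norm_num) (by omega))
  have h4 : (a - 1) * a ^ (r - 1) = a * a ^ (r-1) - a ^ (r-1) := by
    rw [Nat.sub_mul, one_mul]
  have h5 : q ^ (r * m) = a ^ r := by rw [ha, ← pow_mul, Nat.mul_comm]
  have h6 : 2 * a ^ (r-1) ≤ a * a ^ (r-1) := Nat.mul_le_mul_right _ ha2
  have h7 : 2 ≤ a ^ r := by omega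
  rw [h5]
  calc (a-1)^r ≤ (a-1) * a ^ (r-1) := h1
  _ = a * a^(r-1) - a^(r-1) := h4
  _ ≤ a * a^(r-1) - 2 := Nat.sub_le_sub_left h3 _
  _ = a^r - 2 := by rw [h2]
  _ < a^r - 1 := by omega

theorem field_count_vs_elementwise
    (F E : Type*) [Field F] [Fintype F] [Field E] [Fintype E] [DecidableEq E]
    (q r m L : ℕ) (hq : q = Fintype.card F) (hE : Fintype.card E = q ^ r)
    (hr : 2 ≤ r) (hm : 1 ≤ m) (hL : 2 * m ≤ L)
    (w : E) (hw : w ≠ 0) :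
    (Finset.univ.filter
        (fun s : Fin L → E => s ≠ 0 ∧
          ∑ i : Fin m, s ⟨2 * i.1, by have := i.isLt; omega⟩ *
            s ⟨2 * i.1 + 1, by have := i.isLt; omega⟩ = w)).card
      = q ^ (r * (L - m - 1)) * (q ^ (r * m) - 1)
    ∧ q ^ (r * (L - m - 1)) * (q ^ (r * m) - 1)
        > q ^ (r * (L - m - 1)) * ((q ^ m - 1) ^ r) := by
  have hq2 : 2 ≤ q := by rw [hq]; exact Fintype.one_lt_card
  set Q := Fintype.card E with hQdef
  have hexp : m - 1 + (L - 2 * m) = L - m - 1 := by omega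
  have hq0 : 0 < q := by omega
  -- the fiber map
  set g : (Fin L → E) →+ (Fin m → E) × (Fin m → E) := AddMonoidHom.mk'
    (fun s => (fun i => s ⟨2 * i.1, by have := i.isLt; omega⟩,
               fun i => s ⟨2 * i.1 + 1, by have := i.isLt; omega⟩))
    (by intro a b; rfl) with hgdef
  -- drop the s ≠ 0 condition and rephrase via g
  have hfe : (Finset.univ.filter
        (fun s : Fin L → E => s ≠ 0 ∧
          ∑ i : Fin m, s ⟨2 * i.1, by have := i.isLt; omega⟩ *
            s ⟨2 * i.1 + 1, by have := i.isLt; omega⟩ = w))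
      = (Finset.univ.filter
        (fun s : Fin L → E => ∑ i : Fin m, (g s).1 i * (g s).2 i = w)) := by
    apply Finset.filter_congr
    intro s _
    constructor
    · intro h
      have h2 := h.2
      simp only [hgdef, AddMonoidHom.mk'_apply]
      exact h2
    · intro h
      simp only [hgdef, AddMonoidHom.mk'_apply] at h
      refine ⟨?_, h⟩
      rintro rfl
      simp only [hgdef, AddMonoidHom.mk'_apply, Pi.zero_apply, zero_mul,
        Finset.sum_const_zero] at h
      exact hw h.symm
  have hsurj : Function.Surjective g := by
    rintro ⟨x, y⟩
    refine ⟨fun j => if h2 : j.1 % 2 = 0 then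
        (if h : j.1 / 2 < m then x ⟨j.1 / 2, h⟩ else 0)
      else (if h : j.1 / 2 < m then y ⟨j.1 / 2, h⟩ else 0), ?_⟩
    simp only [hgdef, AddMonoidHom.mk'_apply, Prod.mk.injEq]
    constructor
    · funext i
      have h1 : (2 * i.1) % 2 = 0 := by omega
      have h2 : (2 * i.1) / 2 = i.1 := by omega
      simp [h1, h2, i.isLt]
    · funext i
      have h1 : ¬ ((2 * i.1 + 1) % 2 = 0) := by omega
      have h2 : (2 * i.1 + 1) / 2 = i.1 := by omega
      simp [h1, h2, i.isLt]
  -- fiber card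
  have hfibcard : ∀ p, (univ.filter fun s : Fin L → E => g s = p).card = Q ^ (L - 2 * m) := by
    intro p
    have h := card_fiber_mul g hsurj p
    have hca : Fintype.card (Fin L → E) = Q ^ L := by simp [Fintype.card_fun, hQdef]
    have hcb : Fintype.card ((Fin m → E) × (Fin m → E)) = Q ^ (2 * m) := by
      simp [Fintype.card_fun]
      rw [← pow_add]
      congr 1; omega
    rw [hca, hcb] at h
    have : Q ^ L = Q ^ (L - 2 * m) * Q ^ (2 * m) := by rw [← pow_add]; congr 1; omega
    rw [this] at h
    exact Nat.eq_of_mul_eq_mul_right (Nat.pow_pos Fintype.card_pos) h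
  -- fiberwise
  have hsplit := Finset.card_eq_sum_card_fiberwise (f := g)
    (s := (Finset.univ.filter
        (fun s : Fin L → E => ∑ i : Fin m, (g s).1 i * (g s).2 i = w)))
    (t := univ.filter fun p : (Fin m → E) × (Fin m → E) => ∑ i, p.1 i * p.2 i = w)
    (by
      intro s hs
      simp only [mem_coe, mem_filter, mem_univ, true_and] at hs ⊢
      exact hs)
  have hfib2 : ∀ p ∈ (univ.filter fun p : (Fin m → E) × (Fin m → E) => ∑ i, p.1 i * p.2 i = w),
      ((Finset.univ.filter
        (fun s : Fin L → E => ∑ i : Fin m, (g s).1 i * (g s).2 i = w)).filter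
          fun s => g s = p).card = Q ^ (L - 2 * m) := by
    intro p hp
    simp only [mem_filter, mem_univ, true_and] at hp
    rw [Finset.filter_filter]
    have heq : ∀ s : Fin L → E,
        ((∑ i : Fin m, (g s).1 i * (g s).2 i = w) ∧ g s = p) ↔ g s = p := by
      intro s
      constructor
      · exact fun h => h.2
      · intro h
        exact ⟨by rw [h]; exact hp, h⟩
    rw [Finset.filter_congr (fun s _ => heq s), hfibcard p]
  have hkey : (Finset.univ.filter
        (fun s : Fin L → E => s ≠ 0 ∧
          ∑ i : Fin m, s ⟨2 * i.1, by have := i.isLt; omega⟩ *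
            s ⟨2 * i.1 + 1, by have := i.isLt; omega⟩ = w)).card
      = (Q ^ m - 1) * Q ^ (m - 1) * Q ^ (L - 2 * m) := by
    rw [hfe, hsplit, Finset.sum_congr rfl hfib2, Finset.sum_const, smul_eq_mul,
      dot_count hm w hw]
  -- arithmetic
  have harith : (Q ^ m - 1) * Q ^ (m - 1) * Q ^ (L - 2 * m)
      = q ^ (r * (L - m - 1)) * (q ^ (r * m) - 1) := by
    rw [hE, ← pow_mul, ← pow_mul, ← pow_mul, mul_assoc, ← pow_add, mul_comm]
    congr 2
    rw [← Nat.mul_add, hexp]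
  constructor
  · rw [hkey, harith]
  · have hlt := ineq_lemma hq2 hr hm
    have hpos : 0 < q ^ (r * (L - m - 1)) := Nat.pow_pos hq0
    exact (mul_lt_mul_iff_right₀ hpos).mpr hlt
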